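/- If H is a graph with |V(H)| ≥ 3, then α(H) − 1 ≤ tree-α(C(H)) ≤ α(H), where C(H) is the 1-completion of H. -/

import Mathlib

open SimpleGraph

structure TreeDecomp {V : Type} (G : SimpleGraph V) where
  ι : Type
  tree : SimpleGraph ι
  isTree : tree.IsTree
  bag : ι → Finset V
  covers_edge : ∀ ⦃u v : V⦄, G.Adj u v → ∃ t, u ∈ bag t ∧ v ∈ bag t
  support_connected : ∀ v : V, (tree.induce {t | v ∈ bag t}).Connected

noncomputable def indepNum {V : Type} (G : SimpleGraph V) (s : Set V) : ℕ :=
  sSup {n | ∃ t : Finset V, ↑t ⊆ s ∧ (↑t : Set V).Pairwise (fun a b => ¬ G.Adj a b) ∧ t.card = n}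

noncomputable def alpha {V : Type} (G : SimpleGraph V) : ℕ := indepNum G Set.univ

noncomputable def chiNat {V : Type} (G : SimpleGraph V) : ℕ := G.chromaticNumber.toNat

noncomputable def tw {V : Type} (G : SimpleGraph V) : ℕ :=
  sInf {w | ∃ D : TreeDecomp G, ∀ t, (D.bag t).card ≤ w + 1}

noncomputable def treeAlpha {V : Type} (G : SimpleGraph V) : ℕ :=
  sInf {k | ∃ D : TreeDecomp G, ∀ t, indepNum G ↑(D.bag t) ≤ k}

noncomputable def treeChi {V : Type} (G : SimpleGraph V) : ℕ :=
  sInf {k | ∃ D : TreeDecomp G, ∀ t, chiNat (G.induce ↑(D.bag t)) ≤ k}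

noncomputable def treeTw {V : Type} (G : SimpleGraph V) : ℕ :=
  sInf {k | ∃ D : TreeDecomp G, ∀ t, tw (G.induce ↑(D.bag t)) ≤ k}

noncomputable def omegaNum {V : Type} (G : SimpleGraph V) : ℕ :=
  sSup {n | ∃ t : Finset V, G.IsClique ↑t ∧ t.card = n}

def completion {V : Type} (H : SimpleGraph V) :
    SimpleGraph (V ⊕ {p : Sym2 V // ¬ p.IsDiag ∧ p ∉ H.edgeSet}) :=
  SimpleGraph.fromRel (fun x y =>
    match x, y with
    | .inl u, .inl v => H.Adj u v
    | .inl u, .inr p => u ∈ p.1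
    | _, _ => False)


section TreeAux
variable {ι : Type} (T : SimpleGraph ι)

/-- The `y`-side of the edge `(x,y)`. -/
def eside (x y : ι) : Set ι := {z | (T \ fromEdgeSet {s(x,y)}).Reachable y z}

variable {T}
attribute [local instance] Classical.decEq

lemma del_adj {e : Sym2 ι} {a b : ι} :
    (T \ fromEdgeSet {e}).Adj a b ↔ T.Adj a b ∧ s(a,b) ≠ e := by
  simp only [sdiff_adj, fromEdgeSet_adj, Set.mem_singleton_iff]
  constructor
  · rintro ⟨h1, h2⟩
    exact ⟨h1, fun hh => h2 ⟨hh, h1.ne⟩⟩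
  · rintro ⟨h1, h2⟩
    exact ⟨h1, fun hh => h2 hh.1⟩

lemma del_le {e : Sym2 ι} : (T \ fromEdgeSet {e}) ≤ T := sdiff_le

lemma walk_to_del {e : Sym2 ι} {a b : ι} (p : T.Walk a b) (h : e ∉ p.edges) :
    (T \ fromEdgeSet {e}).Reachable a b := by
  refine ⟨p.transfer _ fun e' he' => ?_⟩
  rw [edgeSet_sdiff, edgeSet_fromEdgeSet]
  refine ⟨p.edges_subset_edgeSet he', ?_⟩
  rintro ⟨h1, -⟩
  rw [Set.mem_singleton_iff] at h1
  exact h (h1 ▸ he')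

lemma del_walk_to_walk {e : Sym2 ι} {a b : ι} (p : (T \ fromEdgeSet {e}).Walk a b) :
    ∃ q : T.Walk a b, q.edges = p.edges ∧ q.support = p.support :=
  ⟨p.transfer T (fun e' he' => edgeSet_mono del_le (p.edges_subset_edgeSet he')),
    p.edges_transfer _, p.support_transfer _⟩

lemma mem_eside_iff {x y z : ι} :
    z ∈ eside T x y ↔ ∃ p : T.Walk y z, s(x,y) ∉ p.edges := by
  constructor
  · rintro ⟨p⟩
    obtain ⟨q, hq, -⟩ := del_walk_to_walk p
    refine ⟨q, fun hc => ?_⟩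
    rw [hq] at hc
    have h2 := p.edges_subset_edgeSet hc
    rw [edgeSet_sdiff, edgeSet_fromEdgeSet] at h2
    have := T.not_isDiag_of_mem_edgeSet h2.1
    exact h2.2 ⟨rfl, this⟩
  · rintro ⟨p, hp⟩
    exact walk_to_del p hp

lemma mem_eside_self (x y : ι) : y ∈ eside T x y := Reachable.refl y

lemma eside_disjoint (hT : T.IsTree) {x y z : ι} (hxy : T.Adj x y) :
    z ∈ eside T x y → z ∈ eside T y x → False := by
  intro h1 h2
  have hb : T.IsBridge s(x,y) := isAcyclic_iff_forall_adj_isBridge.mp hT.2 hxy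
  rw [isBridge_iff] at hb
  refine hb ?_
  have h2' : (T \ fromEdgeSet {s(x,y)}).Reachable x z := by
    rwa [eside, Sym2.eq_swap] at h2
  exact h2'.trans h1.symm

lemma eside_step {x y a c : ι} (hac : T.Adj a c)
    (ha : a ∈ eside T x y ∨ a ∈ eside T y x) :
    c ∈ eside T x y ∨ c ∈ eside T y x := by
  by_cases he : s(a,c) = s(x,y)
  · rw [Sym2.eq_iff] at he
    rcases he with ⟨rfl, rfl⟩ | ⟨rfl, rfl⟩
    · exact Or.inl (mem_eside_self a c)
    · exact Or.inr (mem_eside_self a c)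
  · have hadj : (T \ fromEdgeSet {s(x,y)}).Adj a c := by
      rw [del_adj]; exact ⟨hac, he⟩
    have hadj' : (T \ fromEdgeSet {s(y,x)}).Adj a c := by
      rw [del_adj, Sym2.eq_swap (a := y)]; exact ⟨hac, he⟩
    rcases ha with h | h
    · exact Or.inl (h.trans hadj.reachable)
    · exact Or.inr (h.trans hadj'.reachable)

lemma eside_union_aux {x y : ι} {a b : ι} (p : T.Walk a b)
    (ha : a ∈ eside T x y ∨ a ∈ eside T y x) :
    b ∈ eside T x y ∨ b ∈ eside T y x := by
  induction p with
  | nil => exact ha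
  | cons hab p ih => exact ih (eside_step hab ha)

lemma eside_union {x y : ι} (hT : T.IsTree) (z : ι) :
    z ∈ eside T x y ∨ z ∈ eside T y x := by
  obtain ⟨p⟩ := hT.1.preconnected y z
  exact eside_union_aux p (Or.inl (mem_eside_self x y))

lemma induced_walk {S : Set ι} (hS : (T.induce S).Connected) {a b : ι}
    (ha : a ∈ S) (hb : b ∈ S) :
    ∃ p : T.Walk a b, ∀ c ∈ p.support, c ∈ S := by
  obtain ⟨q⟩ := hS.preconnected ⟨a, ha⟩ ⟨b, hb⟩
  refine ⟨q.map (SimpleGraph.Embedding.induce S).toHom, ?_⟩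
  intro c hc
  replace hc : c ∈ List.map (SimpleGraph.Embedding.induce (G := T) S).toHom q.support := by
    rw [← Walk.support_map]; exact hc
  rw [List.mem_map] at hc
  obtain ⟨⟨c', hc'⟩, -, rfl⟩ := hc
  exact hc'

lemma eside_nested (hT : T.IsTree) {x y z : ι} (hxy : T.Adj x y) (hxz : T.Adj x z)
    (hyz : y ≠ z) : eside T x z ⊆ eside T y x := by
  intro w hw
  rw [mem_eside_iff] at hw
  obtain ⟨p, hp⟩ := hw
  have hxs : x ∉ p.support := by
    intro hxs
    have h1 : x ∈ eside T x z := by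
      rw [mem_eside_iff]
      exact ⟨p.takeUntil x hxs, fun hc => hp (p.edges_takeUntil_subset hxs hc)⟩
    exact eside_disjoint hT hxz h1 (mem_eside_self z x)
  rw [mem_eside_iff]
  refine ⟨Walk.cons hxz p, ?_⟩
  rw [Walk.edges_cons]
  intro hc
  rcases List.mem_cons.mp hc with hc | hc
  · rw [Sym2.eq_iff] at hc
    rcases hc with ⟨h1, -⟩ | ⟨h1, -⟩
    · exact hxy.ne' h1
    · exact hyz h1
  · exact hxs (p.snd_mem_support_of_mem_edges hc)

lemma eside_localize (hT : T.IsTree) {S : Set ι} (hS : (T.induce S).Connected)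
    {x : ι} (hx : x ∉ S) : ∃ y, T.Adj x y ∧ S ⊆ eside T x y := by
  obtain ⟨⟨a, haS⟩⟩ := hS.nonempty
  obtain ⟨p0⟩ := hT.1.preconnected x a
  have hp : p0.bypass.IsPath := p0.bypass_isPath
  cases hbp : p0.bypass with
  | nil => exact absurd haS hx
  | @cons _ y _ hxy q =>
    rw [hbp, Walk.cons_isPath_iff] at hp
    refine ⟨y, hxy, fun b hbS => ?_⟩
    obtain ⟨r, hr⟩ := induced_walk hS haS hbS
    rw [mem_eside_iff]
    refine ⟨q.append r, ?_⟩
    rw [Walk.edges_append]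
    intro hc
    rcases List.mem_append.mp hc with hc | hc
    · exact hp.2 (q.fst_mem_support_of_mem_edges hc)
    · exact hx (hr _ (r.fst_mem_support_of_mem_edges hc))

lemma eside_crossing (hT : T.IsTree) {S : Set ι} (hS : (T.induce S).Connected)
    {x y a b : ι} (hxy : T.Adj x y) (haS : a ∈ S) (ha : a ∈ eside T x y)
    (hbS : b ∈ S) (hb : b ∈ eside T y x) : x ∈ S ∧ y ∈ S := by
  obtain ⟨w, hw⟩ := induced_walk hS haS hbS
  by_cases he : s(x,y) ∈ w.edges
  · exact ⟨hw _ (w.fst_mem_support_of_mem_edges he),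
      hw _ (w.snd_mem_support_of_mem_edges he)⟩
  · exfalso
    rw [mem_eside_iff] at ha
    obtain ⟨p, hp⟩ := ha
    have hbxy : b ∈ eside T x y := by
      rw [mem_eside_iff]
      refine ⟨p.append w, ?_⟩
      rw [Walk.edges_append]
      intro hc
      rcases List.mem_append.mp hc with hc | hc
      · exact hp hc
      · exact he hc
    exact eside_disjoint hT hxy hbxy hb

noncomputable def dsu (T : SimpleGraph ι) (x : ι) (S : Set ι) : ℕ := sInf ((T.dist x) '' S)

lemma dsu_eq_zero_of_mem {x : ι} {S : Set ι} (hx : x ∈ S) : dsu T x S = 0 :=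
  Nat.le_zero.mp (Nat.sInf_le ⟨x, hx, SimpleGraph.dist_self⟩)

lemma mem_of_dsu_eq_zero (hT : T.IsTree) {x : ι} {S : Set ι} (hS : S.Nonempty)
    (h : dsu T x S = 0) : x ∈ S := by
  rw [dsu, Nat.sInf_eq_zero] at h
  rcases h with h | h
  · obtain ⟨a, haS, ha⟩ := h
    rwa [(hT.1.dist_eq_zero_iff).mp ha] at *
  · exact absurd (hS.image _) (h ▸ Set.not_nonempty_empty)

lemma dsu_succ_le (hT : T.IsTree) {x y : ι} (hxy : T.Adj x y) {S : Set ι}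
    (hS : S.Nonempty) (hsub : S ⊆ eside T x y) : dsu T y S + 1 ≤ dsu T x S := by
  refine le_csInf (hS.image _) ?_
  rintro n ⟨a, haS, rfl⟩
  have hxa : x ≠ a := by
    rintro rfl
    exact eside_disjoint hT hxy (hsub haS) (mem_eside_self y x)
  have hd0 : T.dist x a ≠ 0 := by
    rw [dist_ne_zero_iff_ne_and_reachable]
    exact ⟨hxa, hT.1.preconnected x a⟩
  obtain ⟨p, hplen⟩ := exists_walk_of_dist_ne_zero hd0
  have he : s(x,y) ∈ p.edges := by
    by_contra he
    refine eside_disjoint hT hxy (hsub haS) ?_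
    rw [mem_eside_iff]
    exact ⟨p, by rwa [Sym2.eq_swap (a := y)]⟩
  have hy : y ∈ p.support := p.snd_mem_support_of_mem_edges he
  have hsplit := congrArg Walk.length (p.take_spec hy)
  rw [Walk.length_append] at hsplit
  have h1 : 1 ≤ (p.takeUntil y hy).length := by
    rcases Nat.eq_zero_or_pos (p.takeUntil y hy).length with h0 | h0
    · exact absurd (Walk.eq_of_length_eq_zero h0) hxy.ne
    · exact h0
  have h2 : dsu T y S ≤ (p.dropUntil y hy).length :=
    le_trans (Nat.sInf_le ⟨a, haS, rfl⟩) (dist_le _)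
  omega

end TreeAux

section Compl
attribute [local instance] Classical.decEq Classical.dec

variable {V : Type} {H : SimpleGraph V}

lemma comp_adj_inl_inl {u v : V} :
    (completion H).Adj (.inl u) (.inl v) ↔ H.Adj u v := by
  simp only [completion, fromRel_adj]
  constructor
  · rintro ⟨-, h | h⟩
    · exact h
    · exact h.symm
  · intro h
    exact ⟨by simpa using h.ne, Or.inl h⟩

lemma comp_adj_inl_inr {u : V} {q : {p : Sym2 V // ¬ p.IsDiag ∧ p ∉ H.edgeSet}} :
    (completion H).Adj (.inl u) (.inr q) ↔ u ∈ q.1 := by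
  simp only [completion, fromRel_adj]
  constructor
  · rintro ⟨-, h | h⟩
    · exact h
    · exact h.elim
  · intro h
    exact ⟨by simp, Or.inl h⟩

lemma comp_adj_inr_inl {u : V} {q : {p : Sym2 V // ¬ p.IsDiag ∧ p ∉ H.edgeSet}} :
    (completion H).Adj (.inr q) (.inl u) ↔ u ∈ q.1 := by
  rw [adj_comm]; exact comp_adj_inl_inr

lemma comp_adj_inr_inr {q q' : {p : Sym2 V // ¬ p.IsDiag ∧ p ∉ H.edgeSet}} :
    ¬ (completion H).Adj (.inr q) (.inr q') := by
  simp only [completion, fromRel_adj]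
  rintro ⟨-, h | h⟩ <;> exact h

lemma le_indepNum_finset {V' : Type} (G : SimpleGraph V') (B : Finset V') (t : Finset V')
    (h1 : ↑t ⊆ (↑B : Set V')) (h2 : (↑t : Set V').Pairwise fun a b => ¬G.Adj a b) :
    t.card ≤ indepNum G ↑B := by
  refine le_csSup ⟨B.card, ?_⟩ ⟨t, h1, h2, rfl⟩
  rintro n ⟨t', ht1, -, rfl⟩
  exact Finset.card_le_card (by exact_mod_cast ht1)

lemma indepNum_le {V' : Type} {G : SimpleGraph V'} {s : Set V'} {m : ℕ}
    (h : ∀ t : Finset V', ↑t ⊆ s → (↑t : Set V').Pairwise (fun a b => ¬G.Adj a b) →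
      t.card ≤ m) : indepNum G s ≤ m := by
  refine csSup_le ⟨0, ∅, by simp⟩ ?_
  rintro n ⟨t, h1, h2, rfl⟩
  exact h t h1 h2

lemma le_alpha [Fintype V] (t : Finset V)
    (h : (↑t : Set V).Pairwise fun a b => ¬H.Adj a b) : t.card ≤ alpha H := by
  refine le_csSup ⟨Fintype.card V, ?_⟩ ⟨t, by simp, h, rfl⟩
  rintro n ⟨t', -, -, rfl⟩
  exact t'.card_le_univ

lemma exists_max_indep [Fintype V] (H : SimpleGraph V) :
    ∃ A : Finset V, (↑A : Set V).Pairwise (fun a b => ¬H.Adj a b) ∧ A.card = alpha H := by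
  have h : alpha H ∈ {n | ∃ t : Finset V, ↑t ⊆ (Set.univ : Set V) ∧
      (↑t : Set V).Pairwise (fun a b => ¬ H.Adj a b) ∧ t.card = n} := by
    refine Nat.sSup_mem ⟨0, ∅, by simp⟩ ⟨Fintype.card V, ?_⟩
    rintro n ⟨t', -, -, rfl⟩
    exact t'.card_le_univ
  obtain ⟨t, -, h2, h3⟩ := h
  exact ⟨t, h2, h3⟩

end Compl

section Star
attribute [local instance] Classical.decEq Classical.dec Classical.decPred

variable {V : Type} [Fintype V]

abbrev PTy (H : SimpleGraph V) := {p : Sym2 V // ¬ p.IsDiag ∧ p ∉ H.edgeSet}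

variable {H : SimpleGraph V}

def starG (H : SimpleGraph V) : SimpleGraph (Option (PTy H)) :=
  fromRel (fun a _ => a = none)

omit [Fintype V] in
lemma starG_adj {a b : Option (PTy H)} :
    (starG H).Adj a b ↔ a ≠ b ∧ (a = none ∨ b = none) := by
  simp [starG, fromRel_adj]

omit [Fintype V] in
lemma starG_isTree : (starG H).IsTree := by
  constructor
  · rw [connected_iff_exists_forall_reachable]
    refine ⟨none, fun c => ?_⟩
    rcases eq_or_ne c none with rfl | hc
    · exact Reachable.refl _
    · exact (Adj.reachable (by rw [starG_adj]; exact ⟨hc.symm, Or.inl rfl⟩))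
  · rw [isAcyclic_iff_forall_adj_isBridge]
    intro a b hab
    rw [isBridge_iff]
    refine ?_
    rw [starG_adj] at hab
    have key : ∀ c : Option (PTy H), c ≠ none →
        ((starG H) \ fromEdgeSet {s(c, none)}).Reachable c none → False := by
      intro c hc hr
      obtain ⟨p⟩ := hr
      cases p with
      | nil => exact hc rfl
      | cons h q =>
        rename_i d
        rw [sdiff_adj, fromEdgeSet_adj] at h
        obtain ⟨h1, h2⟩ := h
        rw [starG_adj] at h1
        have hd : d = none := by
          rcases h1.2 with h | h
          · exact absurd h hc
          · exact h
        subst hd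
        exact h2 ⟨by simp, hc⟩
    rcases hab.2 with rfl | rfl
    · intro hr
      refine key b (fun hb => hab.1 hb.symm) ?_
      rw [show s(b, (none : Option (PTy H))) = s(none, b) from Sym2.eq_swap]
      exact hr.symm
    · intro hr
      exact key a hab.1 hr

/-- The bags of the star decomposition. -/
noncomputable def starBag (H : SimpleGraph V) :
    Option (PTy H) → Finset (V ⊕ PTy H)
  | none => Finset.univ.image Sum.inl
  | some q => (Finset.univ.filter (· ∈ q.1)).image Sum.inl ∪ {Sum.inr q}

lemma mem_starBag_none {w : V ⊕ PTy H} : w ∈ starBag H none ↔ ∃ u, w = Sum.inl u := by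
  simp [starBag, eq_comm]

lemma inl_mem_starBag_some {u : V} {q : PTy H} :
    Sum.inl u ∈ starBag H (some q) ↔ u ∈ q.1 := by
  simp [starBag]

lemma inr_mem_starBag_some {q' q : PTy H} :
    Sum.inr q' ∈ starBag H (some q) ↔ q' = q := by
  simp [starBag]

noncomputable def starDecomp (H : SimpleGraph V) : TreeDecomp (completion H) where
  ι := Option (PTy H)
  tree := starG H
  isTree := starG_isTree
  bag := starBag H
  covers_edge := by
    rintro (u | q) (v | q') hadj
    · exact ⟨none, by simp [mem_starBag_none], by simp [mem_starBag_none]⟩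
    · rw [comp_adj_inl_inr] at hadj
      exact ⟨some q', by simp [inl_mem_starBag_some, hadj], by simp [inr_mem_starBag_some]⟩
    · rw [comp_adj_inr_inl] at hadj
      exact ⟨some q, by simp [inr_mem_starBag_some], by simp [inl_mem_starBag_some, hadj]⟩
    · exact absurd hadj comp_adj_inr_inr
  support_connected := by
    rintro (u | q)
    · rw [connected_iff_exists_forall_reachable]
      refine ⟨⟨none, by simp [mem_starBag_none]⟩, ?_⟩
      rintro ⟨c, hc⟩
      rcases eq_or_ne c none with rfl | hcn
      · exact Reachable.refl _
      · have hadj : (starG H).Adj none c := by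
          rw [starG_adj]
          exact ⟨fun h => hcn h.symm, Or.inl rfl⟩
        exact Adj.reachable (by exact hadj)
    · rw [connected_iff_exists_forall_reachable]
      refine ⟨⟨some q, by simp [inr_mem_starBag_some]⟩, ?_⟩
      rintro ⟨b, hb⟩
      have hmem : ∀ c : Option (PTy H), Sum.inr q ∈ starBag H c → c = some q := by
        rintro (_ | c) hc
        · rw [mem_starBag_none] at hc
          obtain ⟨u, hu⟩ := hc
          exact absurd hu (by simp)
        · rw [inr_mem_starBag_some] at hc
          rw [hc]
      have hb' := hmem b hb
      subst hb'
      exact Reachable.refl _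

lemma sym2_exists_rep (p : Sym2 V) : ∃ a b, p = s(a, b) :=
  Sym2.ind (fun a b => ⟨a, b, rfl⟩) p

lemma alpha_ge_two (q : PTy H) : 2 ≤ alpha H := by
  obtain ⟨a, b, hab⟩ := sym2_exists_rep q.1
  have hd := q.2.1
  have hne : a ≠ b := by
    rw [hab] at hd
    simpa [Sym2.isDiag_iff_proj_eq] using hd
  have hnadj : ¬ H.Adj a b := by
    intro h
    exact q.2.2 (by rw [hab]; exact h)
  have : ({a, b} : Finset V).card = 2 := Finset.card_pair hne
  rw [← this]
  refine le_alpha _ ?_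
  intro x hx y hy hxy
  simp only [Finset.coe_insert, Finset.coe_singleton, Set.mem_insert_iff,
    Set.mem_singleton_iff] at hx hy
  rcases hx with rfl | rfl <;> rcases hy with rfl | rfl
  · exact absurd rfl hxy
  · exact hnadj
  · exact fun h => hnadj h.symm
  · exact absurd rfl hxy

lemma indepNum_starBag_none : indepNum (completion H) ↑(starBag H none) ≤ alpha H := by
  refine indepNum_le ?_
  intro t ht hind
  have hall : ∀ w ∈ t, ∃ u, w = Sum.inl u := by
    intro w hw
    have := ht hw
    rw [Finset.mem_coe, mem_starBag_none] at this
    exact this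
  set t' : Finset V := t.preimage Sum.inl (Sum.inl_injective.injOn) with ht'
  have himg : t'.image Sum.inl = t := by
    apply Finset.Subset.antisymm
    · intro w hw
      rw [Finset.mem_image] at hw
      obtain ⟨u, hu, rfl⟩ := hw
      rwa [ht', Finset.mem_preimage] at hu
    · intro w hw
      obtain ⟨u, rfl⟩ := hall w hw
      rw [Finset.mem_image]
      exact ⟨u, by rwa [ht', Finset.mem_preimage], rfl⟩
  have hcard : t.card = t'.card := by
    rw [← himg, Finset.card_image_of_injective _ Sum.inl_injective]
  rw [hcard]
  refine le_alpha _ ?_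
  intro x hx y hy hxy
  intro hadj
  have hx' : (Sum.inl x : V ⊕ PTy H) ∈ (↑t : Set (V ⊕ PTy H)) := by
    rw [← himg]; exact_mod_cast Finset.mem_image_of_mem _ (by exact_mod_cast hx)
  have hy' : (Sum.inl y : V ⊕ PTy H) ∈ (↑t : Set (V ⊕ PTy H)) := by
    rw [← himg]; exact_mod_cast Finset.mem_image_of_mem _ (by exact_mod_cast hy)
  exact hind hx' hy' (by simpa using hxy) (comp_adj_inl_inl.mpr hadj)

lemma indepNum_starBag_some (q : PTy H) :
    indepNum (completion H) ↑(starBag H (some q)) ≤ alpha H := by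
  refine le_trans (indepNum_le ?_) (alpha_ge_two q)
  intro t ht hind
  by_contra hc
  push_neg at hc
  obtain ⟨a, b, hab⟩ := sym2_exists_rep q.1
  set S3 : Finset (V ⊕ PTy H) := {Sum.inl a, Sum.inl b, Sum.inr q} with hS3
  have hsub : t ⊆ S3 := by
    intro w hw
    have hwb := ht hw
    rw [Finset.mem_coe] at hwb
    rcases w with u | q'
    · rw [inl_mem_starBag_some, hab, Sym2.mem_iff] at hwb
      rcases hwb with rfl | rfl
      · exact Finset.mem_insert_self _ _
      · exact Finset.mem_insert_of_mem (Finset.mem_insert_self _ _)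
    · rw [inr_mem_starBag_some] at hwb
      subst hwb
      exact Finset.mem_insert_of_mem (Finset.mem_insert_of_mem (Finset.mem_singleton_self _))
  have hS3card : S3.card ≤ 3 := by
    refine le_trans (Finset.card_insert_le _ _) ?_
    simp [Nat.succ_le_succ, Finset.card_insert_le]
  have heq : t = S3 := Finset.eq_of_subset_of_card_le hsub (by omega)
  have h1 : (Sum.inl a : V ⊕ PTy H) ∈ (↑t : Set (V ⊕ PTy H)) := by
    rw [heq]; simp [hS3]
  have h2 : (Sum.inr q : V ⊕ PTy H) ∈ (↑t : Set (V ⊕ PTy H)) := by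
    rw [heq]; simp [hS3]
  refine hind h1 h2 (by simp) (comp_adj_inl_inr.mpr ?_)
  rw [hab, Sym2.mem_iff]
  exact Or.inl rfl

lemma treeAlpha_le_alpha (H : SimpleGraph V) :
    treeAlpha (completion H) ≤ alpha H := by
  refine Nat.sInf_le ⟨starDecomp H, ?_⟩
  rintro (_ | q)
  · exact indepNum_starBag_none
  · exact indepNum_starBag_some q

section Lower
attribute [local instance] Classical.decEq Classical.dec Classical.decPred

variable {V : Type} [Fintype V] {H : SimpleGraph V}

variable (D : TreeDecomp (completion H))

/-- The support of a vertex in the tree decomposition. -/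
def suppS (w : V ⊕ PTy H) : Set D.ι := {t | w ∈ D.bag t}

lemma suppS_connected (w : V ⊕ PTy H) : (D.tree.induce (suppS D w)).Connected :=
  D.support_connected w

lemma suppS_nonempty (w : V ⊕ PTy H) : (suppS D w).Nonempty := by
  obtain ⟨⟨t, ht⟩⟩ := (suppS_connected D w).nonempty
  exact ⟨t, ht⟩

variable (A : Finset V)

/-- The winning configuration: two vertices of `A` whose supports lie on
opposite sides of a tree edge. -/
def Win : Prop :=
  ∃ x y, D.tree.Adj x y ∧ ∃ u ∈ A, ∃ v ∈ A, u ≠ v ∧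
    suppS D (Sum.inl u) ⊆ eside D.tree x y ∧ suppS D (Sum.inl v) ⊆ eside D.tree y x

/-- The set of vertices of `A` missing from the bag at `x`. -/
noncomputable def missA (x : D.ι) : Finset V := A.filter (fun w => Sum.inl w ∉ D.bag x)

lemma exists_step (hnW : ¬ Win D A) {x : D.ι} (hx : (missA D A x).Nonempty) :
    ∃ y, D.tree.Adj x y ∧ ∀ w ∈ missA D A x, suppS D (Sum.inl w) ⊆ eside D.tree x y := by
  obtain ⟨u, hu⟩ := hx
  have hu' := Finset.mem_filter.mp hu
  have hxu : x ∉ suppS D (Sum.inl u) := hu'.2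
  obtain ⟨yu, hadj_u, hsub_u⟩ :=
    eside_localize D.isTree (suppS_connected D (Sum.inl u)) hxu
  refine ⟨yu, hadj_u, ?_⟩
  intro w hw
  rcases eq_or_ne w u with rfl | hwu
  · exact hsub_u
  · have hw' := Finset.mem_filter.mp hw
    obtain ⟨yw, hadj_w, hsub_w⟩ :=
      eside_localize D.isTree (suppS_connected D (Sum.inl w)) hw'.2
    rcases eq_or_ne yw yu with rfl | hyy
    · exact hsub_w
    · exfalso
      refine hnW ⟨x, yu, hadj_u, u, hu'.1, w, hw'.1, hwu.symm, hsub_u, ?_⟩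
      exact fun t ht => eside_nested D.isTree hadj_u hadj_w hyy.symm (hsub_w ht)

lemma missA_mono (hnW : ¬ Win D A) {x y : D.ι} (hxy : D.tree.Adj x y)
    (hstep : ∀ w ∈ missA D A x, suppS D (Sum.inl w) ⊆ eside D.tree x y)
    (hxne : (missA D A x).Nonempty)
    {z : D.ι} (hyz : D.tree.Adj y z)
    (hstep' : ∀ w ∈ missA D A y, suppS D (Sum.inl w) ⊆ eside D.tree y z) :
    missA D A y ⊆ missA D A x := by
  intro w hwy
  by_contra hwx
  have hw' := Finset.mem_filter.mp hwy
  have hxw : x ∈ suppS D (Sum.inl w) := by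
    have : ¬ (w ∈ A ∧ Sum.inl w ∉ D.bag x) := fun hc => hwx (Finset.mem_filter.mpr hc)
    by_contra hxw
    exact this ⟨hw'.1, hxw⟩
  rcases eq_or_ne z x with rfl | hzx
  · -- the step from y goes back to x
    obtain ⟨u, hu⟩ := hxne
    have hu' := Finset.mem_filter.mp hu
    have huy : u ∉ missA D A y := by
      intro huy
      obtain ⟨t, ht⟩ := suppS_nonempty D (Sum.inl u)
      exact eside_disjoint D.isTree hxy (hstep u hu ht) (hstep' u huy ht)
    have hune : u ≠ w := fun h => huy (h ▸ hwy)
    exact hnW ⟨_, y, hxy, u, hu'.1, w, hw'.1, hune, hstep u hu, hstep' w hwy⟩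
  · have h1 : x ∈ eside D.tree y z := hstep' w hwy hxw
    have h2 : x ∈ eside D.tree x y :=
      eside_nested D.isTree (D.tree.adj_symm hxy) hyz hzx.symm h1
    exact eside_disjoint D.isTree hxy h2 (mem_eside_self y x)

/-- Potential function. -/
noncomputable def potA (x : D.ι) : ℕ :=
  ∑ w ∈ missA D A x, dsu D.tree x (suppS D (Sum.inl w))

lemma pot_decrease (hnW : ¬ Win D A)
    (hbig : ∀ x : D.ι, 2 ≤ (missA D A x).card)
    (x : D.ι) :
    ∃ y, D.tree.Adj x y ∧ potA D A y < potA D A x := by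
  have hxne : (missA D A x).Nonempty := Finset.card_pos.mp (by have := hbig x; omega)
  obtain ⟨y, hxy, hstep⟩ := exists_step D A hnW hxne
  have hyne : (missA D A y).Nonempty := Finset.card_pos.mp (by have := hbig y; omega)
  obtain ⟨z, hyz, hstep'⟩ := exists_step D A hnW hyne
  have hmono : missA D A y ⊆ missA D A x :=
    missA_mono D A hnW hxy hstep hxne hyz hstep'
  refine ⟨y, hxy, ?_⟩
  have key : ∀ w ∈ missA D A y,
      dsu D.tree y (suppS D (Sum.inl w)) + 1 ≤ dsu D.tree x (suppS D (Sum.inl w)) := by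
    intro w hw
    exact dsu_succ_le D.isTree hxy (suppS_nonempty D (Sum.inl w)) (hstep w (hmono hw))
  calc potA D A y < potA D A y + (missA D A y).card := by
        have := hbig y; omega
    _ = ∑ w ∈ missA D A y, (dsu D.tree y (suppS D (Sum.inl w)) + 1) := by
        rw [potA, Finset.sum_add_distrib, Finset.sum_const, smul_eq_mul, mul_one]
    _ ≤ ∑ w ∈ missA D A y, dsu D.tree x (suppS D (Sum.inl w)) :=
        Finset.sum_le_sum key
    _ ≤ potA D A x := Finset.sum_le_sum_of_subset hmono

lemma no_all_big (hnW : ¬ Win D A) (hbig : ∀ x : D.ι, 2 ≤ (missA D A x).card) :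
    False := by
  have hne : Nonempty D.ι := D.isTree.1.nonempty
  obtain ⟨x0⟩ := hne
  have : ∀ n : ℕ, ∃ x, potA D A x + n ≤ potA D A x0 := by
    intro n
    induction n with
    | zero => exact ⟨x0, le_refl _⟩
    | succ n ih =>
      obtain ⟨x, hx⟩ := ih
      obtain ⟨y, -, hy⟩ := pot_decrease D A hnW hbig x
      exact ⟨y, by omega⟩
  obtain ⟨x, hx⟩ := this (potA D A x0 + 1)
  omega

end Lower
section Win
attribute [local instance] Classical.decEq Classical.dec Classical.decPred

variable {V : Type} [Fintype V] {H : SimpleGraph V}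

/-- Package a non-edge as a subdivision vertex. -/
def pairP {a b : V} (hne : a ≠ b) (hnadj : ¬ H.Adj a b) : PTy H :=
  ⟨s(a,b), by simp [Sym2.mk_isDiag_iff, hne], by simp [← SimpleGraph.mem_edgeSet] at hnadj ⊢; exact hnadj⟩

@[simp] lemma pairP_val {a b : V} (hne : a ≠ b) (hnadj : ¬ H.Adj a b) :
    (pairP hne hnadj).1 = s(a,b) := rfl

variable (D : TreeDecomp (completion H))

lemma cross_lemma {x y : D.ι} (hxy : D.tree.Adj x y) {a b : V ⊕ PTy H}
    (hadj : (completion H).Adj a b)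
    (hQa : (suppS D a ∩ eside D.tree x y).Nonempty)
    (hQb : ¬ (suppS D b ∩ eside D.tree x y).Nonempty) :
    x ∈ suppS D a ∧ y ∈ suppS D a := by
  obtain ⟨c, hc1, hc2⟩ := D.covers_edge hadj
  have hcside : c ∈ eside D.tree y x := by
    rcases eside_union D.isTree (x := x) (y := y) c with h | h
    · exact absurd ⟨c, hc2, h⟩ hQb
    · exact h
  obtain ⟨t0, ht0a, ht0s⟩ := hQa
  exact eside_crossing D.isTree (suppS_connected D a) hxy ht0a ht0s hc1 hcside

variable (A : Finset V)

lemma win_bound (hA : (↑A : Set V).Pairwise fun a b => ¬H.Adj a b) (hW : Win D A) :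
    ∃ x, A.card - 1 ≤ indepNum (completion H) ↑(D.bag x) := by
  obtain ⟨x, y, hxy, u, huA, v, hvA, huv, hsu, hsv⟩ := hW
  refine ⟨x, ?_⟩
  set Q : (V ⊕ PTy H) → Prop :=
    fun w => (suppS D w ∩ eside D.tree x y).Nonempty with hQdef
  have hQu : Q (Sum.inl u) := by
    obtain ⟨t, ht⟩ := suppS_nonempty D (Sum.inl u)
    exact ⟨t, ht, hsu ht⟩
  have hQv : ¬ Q (Sum.inl v) := by
    rintro ⟨t, ht1, ht2⟩
    exact eside_disjoint D.isTree hxy ht2 (hsv ht1)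
  have contrau : x ∉ suppS D (Sum.inl u) := by
    intro hx
    exact eside_disjoint D.isTree hxy (hsu hx) (mem_eside_self y x)
  have hnadj_uv : ¬ H.Adj u v := hA huA hvA huv
  set puv : PTy H := pairP huv hnadj_uv with hpuv
  -- the subdivision vertex of the pair (u,v) lies in the bag at x
  have hpuv_bag : Sum.inr puv ∈ D.bag x := by
    by_cases hQp : Q (Sum.inr puv)
    · refine (cross_lemma D hxy (a := Sum.inr puv) (b := Sum.inl v) ?_ hQp hQv).1
      rw [comp_adj_inr_inl]
      simp [hpuv, pairP]
    · exfalso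
      refine contrau (cross_lemma D hxy (a := Sum.inl u) (b := Sum.inr puv) ?_ hQu hQp).1
      rw [comp_adj_inl_inr]
      simp [hpuv, pairP]
  set B : Finset V := (A.erase u).erase v with hB
  have hBfacts : ∀ w ∈ B, w ∈ A ∧ w ≠ u ∧ w ≠ v := by
    intro w hw
    rw [hB, Finset.mem_erase, Finset.mem_erase] at hw
    exact ⟨hw.2.2, hw.2.1, hw.1⟩
  -- for every other vertex of A, some crossing vertex lies in the bag at x
  have cross : ∀ w ∈ B, ∃ c, c ∈ D.bag x ∧
      (c = Sum.inl w ∨ ∃ q : PTy H, c = Sum.inr q ∧ (q.1 = s(u,w) ∨ q.1 = s(w,v))) := by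
    intro w hw
    obtain ⟨hwA, hwu, hwv⟩ := hBfacts w hw
    have hnadj_uw : ¬ H.Adj u w := hA huA hwA (Ne.symm hwu)
    have hnadj_wv : ¬ H.Adj w v := hA hwA hvA hwv
    set puw : PTy H := pairP (Ne.symm hwu) hnadj_uw with hpuw
    set pwv : PTy H := pairP hwv hnadj_wv with hpwv
    have hadj1 : (completion H).Adj (Sum.inl u) (Sum.inr puw) := by
      rw [comp_adj_inl_inr]; simp [hpuw, pairP]
    have hadj2 : (completion H).Adj (Sum.inr puw) (Sum.inl w) := by
      rw [comp_adj_inr_inl]; simp [hpuw, pairP]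
    have hadj3 : (completion H).Adj (Sum.inl w) (Sum.inr pwv) := by
      rw [comp_adj_inl_inr]; simp [hpwv, pairP]
    have hadj4 : (completion H).Adj (Sum.inr pwv) (Sum.inl v) := by
      rw [comp_adj_inr_inl]; simp [hpwv, pairP]
    by_cases hq1 : Q (Sum.inr puw)
    · by_cases hq2 : Q (Sum.inl w)
      · by_cases hq3 : Q (Sum.inr pwv)
        · exact ⟨Sum.inr pwv, (cross_lemma D hxy hadj4 hq3 hQv).1,
            Or.inr ⟨pwv, rfl, Or.inr rfl⟩⟩
        · exact ⟨Sum.inl w, (cross_lemma D hxy hadj3 hq2 hq3).1, Or.inl rfl⟩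
      · exact ⟨Sum.inr puw, (cross_lemma D hxy hadj2 hq1 hq2).1,
          Or.inr ⟨puw, rfl, Or.inl rfl⟩⟩
    · exact absurd (cross_lemma D hxy hadj1 hQu hq1).1 contrau
  set f : V → (V ⊕ PTy H) := fun w =>
    if h : w ∈ B then (cross w h).choose else Sum.inl u with hf
  have hfspec : ∀ w (h : w ∈ B), f w ∈ D.bag x ∧
      (f w = Sum.inl w ∨ ∃ q : PTy H, f w = Sum.inr q ∧ (q.1 = s(u,w) ∨ q.1 = s(w,v))) := by
    intro w h
    rw [hf]
    simp only [dif_pos h]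
    exact (cross w h).choose_spec
  -- injectivity of `f` on `B`
  have hinj : Set.InjOn f ↑B := by
    intro w1 h1 w2 h2 heq
    rw [Finset.mem_coe] at h1 h2
    obtain ⟨h1A, h1u, h1v⟩ := hBfacts w1 h1
    obtain ⟨h2A, h2u, h2v⟩ := hBfacts w2 h2
    rcases (hfspec w1 h1).2 with hs1 | ⟨q1, hs1, hq1⟩ <;>
      rcases (hfspec w2 h2).2 with hs2 | ⟨q2, hs2, hq2⟩
    · rw [hs1, hs2] at heq; exact Sum.inl_injective heq
    · rw [hs1, hs2] at heq; exact absurd heq (by simp)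
    · rw [hs1, hs2] at heq; exact absurd heq (by simp)
    · rw [hs1, hs2] at heq
      have hqeq : q1.1 = q2.1 := by
        have := Sum.inr_injective heq
        rw [this]
      rcases hq1 with hq1 | hq1 <;> rcases hq2 with hq2 | hq2 <;>
        rw [hq1, hq2, Sym2.eq_iff] at hqeq
      · rcases hqeq with ⟨-, h⟩ | ⟨-, h⟩
        · exact h
        · exact absurd h h1u
      · rcases hqeq with ⟨-, h⟩ | ⟨h, -⟩
        · exact absurd h h1v
        · exact absurd h huv
      · rcases hqeq with ⟨h, -⟩ | ⟨-, h⟩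
        · exact absurd h h1u
        · exact absurd h.symm huv
      · rcases hqeq with ⟨h, -⟩ | ⟨h, -⟩
        · exact h
        · exact absurd h h1v
  -- the subdivision vertex of (u,v) is not among the f-values
  have hnot : Sum.inr puv ∉ B.image f := by
    rw [Finset.mem_image]
    rintro ⟨w, hwB, hfw⟩
    obtain ⟨hwA, hwu, hwv⟩ := hBfacts w hwB
    rcases (hfspec w hwB).2 with hs | ⟨q, hs, hq⟩
    · rw [hs] at hfw; exact absurd hfw (by simp)
    · rw [hs] at hfw
      have hqeq : q.1 = s(u,v) := by rw [Sum.inr_injective hfw, hpuv]; exact pairP_val huv hnadj_uv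
      rcases hq with hq | hq <;> rw [hq, Sym2.eq_iff] at hqeq
      · rcases hqeq with ⟨-, h⟩ | ⟨h, -⟩
        · exact hwv h
        · exact huv h
      · rcases hqeq with ⟨h, -⟩ | ⟨h, -⟩
        · exact hwu h
        · exact hwv h
  -- adjacency killer for inl-inr pairs
  have kill : ∀ w1 ∈ B, ∀ q : PTy H,
      (q.1 = s(u,v) ∨ ∃ w2 ∈ B, f w2 = Sum.inr q ∧ (q.1 = s(u,w2) ∨ q.1 = s(w2,v))) →
      f w1 = Sum.inl w1 → ¬ (completion H).Adj (Sum.inl w1) (Sum.inr q) := by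
    intro w1 h1 q hq hfw1 hadj
    obtain ⟨h1A, h1u, h1v⟩ := hBfacts w1 h1
    rw [comp_adj_inl_inr] at hadj
    rcases hq with hq | ⟨w2, hw2B, hfw2, hq⟩
    · rw [hq, Sym2.mem_iff] at hadj
      rcases hadj with h | h
      · exact h1u h
      · exact h1v h
    · rcases hq with hq | hq <;> rw [hq, Sym2.mem_iff] at hadj
      · rcases hadj with h | h
        · exact h1u h
        · subst h
          rw [hfw1] at hfw2
          exact absurd hfw2 (by simp)
      · rcases hadj with h | h
        · subst h
          rw [hfw1] at hfw2
          exact absurd hfw2 (by simp)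
        · exact h1v h
  -- the independent set
  set I : Finset (V ⊕ PTy H) := insert (Sum.inr puv) (B.image f) with hI
  -- descriptor of elements of I
  have descr : ∀ c ∈ I,
      (∃ q : PTy H, c = Sum.inr q ∧
        (q.1 = s(u,v) ∨ ∃ w2 ∈ B, f w2 = Sum.inr q ∧ (q.1 = s(u,w2) ∨ q.1 = s(w2,v)))) ∨
      (∃ w ∈ B, c = Sum.inl w ∧ f w = Sum.inl w) := by
    intro c hc
    rw [hI, Finset.mem_insert] at hc
    rcases hc with rfl | hc
    · exact Or.inl ⟨puv, rfl, Or.inl (by rw [hpuv]; exact pairP_val huv hnadj_uv)⟩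
    · rw [Finset.mem_image] at hc
      obtain ⟨w, hwB, rfl⟩ := hc
      rcases (hfspec w hwB).2 with hs | ⟨q, hs, hq⟩
      · exact Or.inr ⟨w, hwB, hs, hs⟩
      · exact Or.inl ⟨q, hs, Or.inr ⟨w, hwB, hs, hq⟩⟩
  have hpair : (↑I : Set (V ⊕ PTy H)).Pairwise
      (fun a b => ¬ (completion H).Adj a b) := by
    intro c1 h1 c2 h2 hne hadj
    rw [Finset.mem_coe] at h1 h2
    rcases descr c1 h1 with ⟨q1, rfl, hq1⟩ | ⟨w1, hw1B, hc1, hfw1⟩ <;>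
      rcases descr c2 h2 with ⟨q2, rfl, hq2⟩ | ⟨w2, hw2B, hc2, hfw2⟩
    · exact comp_adj_inr_inr hadj
    · subst hc2
      exact kill w2 hw2B q1 hq1 hfw2 hadj.symm
    · subst hc1
      exact kill w1 hw1B q2 hq2 hfw1 hadj
    · subst hc1; subst hc2
      have hww : w1 ≠ w2 := fun h => hne (by rw [h])
      rw [comp_adj_inl_inl] at hadj
      exact hA (hBfacts w1 hw1B).1 (hBfacts w2 hw2B).1 hww hadj
  -- membership in the bag
  have hsub : (↑I : Set (V ⊕ PTy H)) ⊆ ↑(D.bag x) := by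
    intro c hc
    rw [Finset.mem_coe, hI, Finset.mem_insert] at hc
    rcases hc with rfl | hc
    · exact hpuv_bag
    · rw [Finset.mem_image] at hc
      obtain ⟨w, hwB, rfl⟩ := hc
      exact (hfspec w hwB).1
  -- cardinality
  have hvA' : v ∈ A.erase u := Finset.mem_erase.mpr ⟨Ne.symm huv, hvA⟩
  have hBcard : B.card = A.card - 2 := by
    rw [hB, Finset.card_erase_of_mem hvA', Finset.card_erase_of_mem huA]
    omega
  have hA2 : 2 ≤ A.card := Finset.one_lt_card.mpr ⟨u, huA, v, hvA, huv⟩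
  have hIcard : I.card = A.card - 1 := by
    rw [hI, Finset.card_insert_of_notMem hnot,
      Finset.card_image_of_injOn hinj, hBcard]
    omega
  rw [← hIcard]
  exact le_indepNum_finset _ _ _ hsub hpair

lemma small_bound (hA : (↑A : Set V).Pairwise fun a b => ¬H.Adj a b) (x : D.ι)
    (hsmall : (missA D A x).card ≤ 1) :
    A.card - 1 ≤ indepNum (completion H) ↑(D.bag x) := by
  set t : Finset (V ⊕ PTy H) := (A \ missA D A x).image Sum.inl with ht
  have hsub : (↑t : Set (V ⊕ PTy H)) ⊆ ↑(D.bag x) := by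
    intro c hc
    rw [Finset.mem_coe, ht, Finset.mem_image] at hc
    obtain ⟨w, hw, rfl⟩ := hc
    rw [Finset.mem_sdiff] at hw
    have : ¬ (w ∈ A ∧ Sum.inl w ∉ D.bag x) := fun hcc =>
      hw.2 (Finset.mem_filter.mpr hcc)
    rw [Finset.mem_coe]
    by_contra hbag
    exact this ⟨hw.1, hbag⟩
  have hpair : (↑t : Set (V ⊕ PTy H)).Pairwise
      (fun a b => ¬ (completion H).Adj a b) := by
    intro c1 h1 c2 h2 hne hadj
    rw [Finset.mem_coe, ht, Finset.mem_image] at h1 h2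
    obtain ⟨w1, hw1, rfl⟩ := h1
    obtain ⟨w2, hw2, rfl⟩ := h2
    rw [Finset.mem_sdiff] at hw1 hw2
    rw [comp_adj_inl_inl] at hadj
    exact hA hw1.1 hw2.1 (fun h => hne (by rw [h])) hadj
  have hcard : A.card - 1 ≤ t.card := by
    have hms : missA D A x ⊆ A := by
      rw [missA]; exact Finset.filter_subset _ _
    rw [ht, Finset.card_image_of_injective _ Sum.inl_injective,
      Finset.card_sdiff_of_subset hms]
    omega
  exact le_trans hcard (le_indepNum_finset _ _ _ hsub hpair)

end Win

lemma star_mem {V : Type} [Fintype V] (H : SimpleGraph V) :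
    alpha H ∈ {k | ∃ D : TreeDecomp (completion H),
      ∀ t, indepNum (completion H) ↑(D.bag t) ≤ k} := by
  refine ⟨starDecomp H, ?_⟩
  rintro (_ | q)
  · exact indepNum_starBag_none
  · exact indepNum_starBag_some q

theorem stmt10 {V : Type} [Fintype V] (H : SimpleGraph V) (hV : 3 ≤ Fintype.card V) :
    alpha H - 1 ≤ treeAlpha (completion H) ∧ treeAlpha (completion H) ≤ alpha H := by
  classical
  refine ⟨?_, treeAlpha_le_alpha H⟩
  obtain ⟨A, hA, hAcard⟩ := exists_max_indep H
  rw [← hAcard, treeAlpha]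
  refine le_csInf ⟨alpha H, star_mem H⟩ ?_
  rintro k ⟨D, hk⟩
  by_cases hW : Win D A
  · obtain ⟨x, hx⟩ := win_bound D A hA hW
    exact le_trans hx (hk x)
  · by_cases hsm : ∃ x, (missA D A x).card ≤ 1
    · obtain ⟨x, hx⟩ := hsm
      exact le_trans (small_bound D A hA x hx) (hk x)
    · push_neg at hsm
      exact (no_all_big D A hW (fun x => by have := hsm x; omega)).elim
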